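/- For a Hermitian matrix H on ℂ^{2^n} with Tr(H²) ≤ 1, the twirled quantity E_{C∼μ}[Tr((Tr_{[2,n]}(C H C†))²)] ≥ ((3/2)/(2^n − 2^{−n})) Tr(H²) whenever μ is an exact unitary 2-design (e.g., the uniform measure on the n-qubit Clifford group). -/

import Mathlib

set_option maxHeartbeats 1000000
set_option synthInstance.maxHeartbeats 400000

open MeasureTheory
noncomputable section

abbrev Qub (n : ℕ) := Fin n → Fin 2

instance {n : ℕ} : MeasurableSpace (Matrix (Qub n) (Qub n) ℂ) := borel _

abbrev UGQ (n : ℕ) := Matrix.unitaryGroup (Qub n) ℂ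

/-- Partial trace over qubits `2,…,n`, leaving an operator on the first qubit. -/
def ptr (m : ℕ) (M : Matrix (Qub (m + 1)) (Qub (m + 1)) ℂ) : Matrix (Fin 2) (Fin 2) ℂ :=
  fun a b => ∑ g : Qub (m + 1),
    if g 0 = 0 then M (Function.update g 0 a) (Function.update g 0 b) else 0

/-- `t`-th moment matrix `∫ U^{⊗t} ⊗ conj(U)^{⊗t} dν`. -/
def momentMatrix {n : ℕ} (ν : Measure (UGQ n)) (t : ℕ) :
    Matrix ((Fin t → Qub n) × (Fin t → Qub n)) ((Fin t → Qub n) × (Fin t → Qub n)) ℂ :=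
  fun p q => ∫ U, (∏ k, (U : Matrix (Qub n) (Qub n) ℂ) (p.1 k) (q.1 k))
      * (starRingEnd ℂ) (∏ k, (U : Matrix (Qub n) (Qub n) ℂ) (p.2 k) (q.2 k)) ∂ν

namespace Helper
variable {n : ℕ}

instance : BorelSpace (Matrix (Qub n) (Qub n) ℂ) := ⟨rfl⟩

/-- the integrand of the moment matrix -/
def Fm (p q : (Fin 2 → Qub n) × (Fin 2 → Qub n)) (U : UGQ n) : ℂ :=
  (∏ k, (U : Matrix (Qub n) (Qub n) ℂ) (p.1 k) (q.1 k))
      * (starRingEnd ℂ) (∏ k, (U : Matrix (Qub n) (Qub n) ℂ) (p.2 k) (q.2 k))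

lemma momentMatrix_eq (ν : Measure (UGQ n)) (p q) :
    momentMatrix ν 2 p q = ∫ U, Fm p q U ∂ν := rfl

lemma meas_ent (i j : Qub n) : Measurable (fun U : UGQ n => (U : Matrix (Qub n) (Qub n) ℂ) i j) :=
  ((Continuous.matrix_elem continuous_id i j).measurable).comp measurable_subtype_coe

lemma meas_Fm (p q) : Measurable (Fm (n := n) p q) :=
  (Finset.measurable_prod _ fun k _ => meas_ent _ _).mul
    ((Complex.continuous_conj.measurable).comp
      (Finset.measurable_prod _ fun k _ => meas_ent _ _))

lemma norm_ent_le (U : UGQ n) (i j : Qub n) : ‖(U : Matrix (Qub n) (Qub n) ℂ) i j‖ ≤ 1 := by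
  have h : star (U : Matrix (Qub n) (Qub n) ℂ) * U = 1 := (Unitary.mem_iff.mp U.2).1
  have h2 := congrFun (congrFun h j) j
  rw [Matrix.mul_apply, Matrix.one_apply_eq] at h2
  have h3 : ∀ x, (star (U : Matrix (Qub n) (Qub n) ℂ)) j x * (U : Matrix (Qub n) (Qub n) ℂ) x j
      = ((‖(U : Matrix (Qub n) (Qub n) ℂ) x j‖ : ℂ) ^ 2) := by
    intro x
    rw [Matrix.star_apply, Complex.star_def, Complex.conj_mul']
  rw [Finset.sum_congr rfl (fun x _ => h3 x)] at h2
  have h4 : ∑ x, ‖(U : Matrix (Qub n) (Qub n) ℂ) x j‖ ^ 2 = (1:ℝ) := by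
    have h2' : ((∑ x, ‖(U : Matrix (Qub n) (Qub n) ℂ) x j‖ ^ 2 : ℝ) : ℂ) = 1 := by
      push_cast
      exact h2
    exact_mod_cast h2'
  have h5 : ‖(U : Matrix (Qub n) (Qub n) ℂ) i j‖ ^ 2 ≤ 1 := by
    rw [← h4]
    exact Finset.single_le_sum (fun x _ => sq_nonneg ‖(U : Matrix (Qub n) (Qub n) ℂ) x j‖)
      (Finset.mem_univ i)
  nlinarith [norm_nonneg ((U : Matrix (Qub n) (Qub n) ℂ) i j)]

lemma norm_Fm_le (p q) (U : UGQ n) : ‖Fm p q U‖ ≤ 1 := by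
  unfold Fm
  rw [norm_mul, RCLike.norm_conj]
  have key : ∀ (a b : Fin 2 → Qub n), ‖∏ k, (U : Matrix (Qub n) (Qub n) ℂ) (a k) (b k)‖ ≤ 1 := by
    intro a b
    rw [norm_prod]
    exact Finset.prod_le_one (fun k _ => norm_nonneg _) (fun k _ => norm_ent_le U _ _)
  calc ‖∏ k, (U : Matrix (Qub n) (Qub n) ℂ) (p.1 k) (q.1 k)‖ *
        ‖∏ k, (U : Matrix (Qub n) (Qub n) ℂ) (p.2 k) (q.2 k)‖ ≤ 1 * 1 :=
      mul_le_mul (key _ _) (key _ _) (norm_nonneg _) zero_le_one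
    _ = 1 := by ring

lemma integrable_Fm (ν : Measure (UGQ n)) [IsFiniteMeasure ν] (p q) :
    Integrable (Fm p q) ν :=
  (integrable_const 1).mono' (meas_Fm p q).aestronglyMeasurable
    (ae_of_all _ fun U => norm_Fm_le p q U)

lemma unitarity (U : UGQ n) (s t : Qub n) :
    ∑ x, (starRingEnd ℂ) ((U : Matrix (Qub n) (Qub n) ℂ) x s) * (U : Matrix (Qub n) (Qub n) ℂ) x t
      = if s = t then 1 else 0 := by
  have h : star (U : Matrix (Qub n) (Qub n) ℂ) * U = 1 := (Unitary.mem_iff.mp U.2).1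
  have h2 := congrFun (congrFun h s) t
  rw [Matrix.mul_apply, Matrix.one_apply] at h2
  simp only [Matrix.star_apply, Complex.star_def] at h2
  exact h2

lemma meas_mul_left (g : UGQ n) : Measurable (fun U : UGQ n => g * U) := by
  apply Measurable.subtype_mk
  exact (Continuous.matrix_mul continuous_const continuous_id).measurable.comp
    measurable_subtype_coe

section Inv
variable (μH : Measure (UGQ n)) [IsProbabilityMeasure μH]

lemma M_inv (hinv : ∀ g : UGQ n, Measure.map (fun x => g * x) μH = μH) (g : UGQ n) (p q) :
    momentMatrix μH 2 p q = ∫ U, Fm p q (g * U) ∂μH := by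
  rw [momentMatrix_eq]
  conv_lhs => rw [← hinv g]
  exact integral_map (meas_mul_left g).aemeasurable (meas_Fm p q).aestronglyMeasurable

def dvec (e : Qub n) : Qub n → ℂ := fun j => if j = e then Complex.I else 1

def dU (e : Qub n) : UGQ n := ⟨Matrix.diagonal (dvec e), by
  rw [Matrix.mem_unitaryGroup_iff, Matrix.star_eq_conjTranspose, Matrix.diagonal_conjTranspose,
    Matrix.diagonal_mul_diagonal]
  ext i j
  by_cases hij : i = j
  · subst hij
    rw [Matrix.diagonal_apply_eq, Matrix.one_apply_eq]
    show dvec e i * star (dvec e i) = 1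
    unfold dvec
    split_ifs <;>
      simp [Complex.star_def, Complex.conj_I, mul_neg, Complex.I_mul_I]
  · rw [Matrix.diagonal_apply_ne _ hij, Matrix.one_apply_ne hij]⟩

lemma dfactor_ne_one (e x1 x2 y1 y2 : Qub n)
    (hc : ((if x1 = e then 1 else 0) + (if x2 = e then 1 else 0) : ℕ)
        ≠ (if y1 = e then 1 else 0) + (if y2 = e then 1 else 0)) :
    dvec e x1 * dvec e x2 * (starRingEnd ℂ) (dvec e y1) * (starRingEnd ℂ) (dvec e y2) ≠ 1 := by
  unfold dvec
  split_ifs at hc ⊢ <;>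
    first
      | omega
      | (simp only [map_one, Complex.conj_I]
         intro h
         rw [Complex.ext_iff] at h
         simp at h
         exact absurd h (by norm_num))
      | (simp only [map_one, Complex.conj_I]
         intro h
         rw [Complex.ext_iff] at h
         simp at h)

lemma dU_ent (e : Qub n) (U : UGQ n) (x s : Qub n) :
    ((dU e * U : UGQ n) : Matrix (Qub n) (Qub n) ℂ) x s
      = dvec e x * (U : Matrix (Qub n) (Qub n) ℂ) x s := by
  show (Matrix.diagonal (dvec e) * (U : Matrix (Qub n) (Qub n) ℂ)) x s = _
  rw [Matrix.diagonal_mul]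

lemma Fm_dU (e x1 x2 y1 y2 : Qub n) (q) (U : UGQ n) :
    Fm (![x1,x2],![y1,y2]) q (dU e * U) =
      (dvec e x1 * dvec e x2 * (starRingEnd ℂ) (dvec e y1) * (starRingEnd ℂ) (dvec e y2))
        * Fm (![x1,x2],![y1,y2]) q U := by
  unfold Fm
  simp only [Fin.prod_univ_two, Matrix.cons_val_zero, Matrix.cons_val_one, Matrix.head_cons,
    dU_ent, map_mul]
  ring

lemma vanish (hinv : ∀ g : UGQ n, Measure.map (fun x => g * x) μH = μH)
    (e x1 x2 y1 y2 : Qub n) (q)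
    (hc : ((if x1 = e then 1 else 0) + (if x2 = e then 1 else 0) : ℕ)
        ≠ (if y1 = e then 1 else 0) + (if y2 = e then 1 else 0)) :
    momentMatrix μH 2 (![x1,x2],![y1,y2]) q = 0 := by
  have hcne := dfactor_ne_one e x1 x2 y1 y2 hc
  have h1 := M_inv μH hinv (dU e) (![x1,x2],![y1,y2]) q
  simp only [Fm_dU] at h1
  rw [integral_const_mul, ← momentMatrix_eq] at h1
  have h2 : (1 - (dvec e x1 * dvec e x2 * (starRingEnd ℂ) (dvec e y1) * (starRingEnd ℂ) (dvec e y2)))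
      * momentMatrix μH 2 (![x1,x2],![y1,y2]) q = 0 := by
    linear_combination h1
  rcases mul_eq_zero.mp h2 with h | h
  · exact absurd (by linear_combination -h) hcne
  · exact h

def pU (σ : Equiv.Perm (Qub n)) : UGQ n := ⟨fun a b => if a = σ b then 1 else 0, by
  refine Matrix.mem_unitaryGroup_iff.mpr ?_
  change (Matrix.of fun a b => if a = σ b then (1:ℂ) else 0) *
    star (Matrix.of fun a b => if a = σ b then (1:ℂ) else 0) = 1
  ext a b
  rw [Matrix.mul_apply, Matrix.one_apply]
  rw [Finset.sum_eq_single (σ⁻¹ a)]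
  · simp only [Matrix.star_apply, Matrix.of_apply, Equiv.Perm.inv_def, Equiv.apply_symm_apply]
    by_cases hab : a = b
    · subst hab; simp
    · simp [hab, Ne.symm hab, Complex.star_def]
  · intro x _ hx
    have hax : ¬ (a = σ x) := fun h => hx (by simp [h])
    simp [hax]
  · simp⟩

lemma pU_ent (σ : Equiv.Perm (Qub n)) (U : UGQ n) (x s : Qub n) :
    ((pU σ * U : UGQ n) : Matrix (Qub n) (Qub n) ℂ) x s
      = (U : Matrix (Qub n) (Qub n) ℂ) (σ⁻¹ x) s := by
  show ∑ y, (if x = σ y then (1:ℂ) else 0) * (U : Matrix (Qub n) (Qub n) ℂ) y s = _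
  rw [Finset.sum_eq_single (σ⁻¹ x)]
  · simp
  · intro y _ hy
    have : ¬ (x = σ y) := fun h => hy (by simp [h])
    simp [this]
  · simp

lemma M_perm (hinv : ∀ g : UGQ n, Measure.map (fun x => g * x) μH = μH)
    (σ : Equiv.Perm (Qub n)) (x1 x2 y1 y2 : Qub n) (q) :
    momentMatrix μH 2 (![σ x1, σ x2], ![σ y1, σ y2]) q
      = momentMatrix μH 2 (![x1,x2],![y1,y2]) q := by
  rw [M_inv μH hinv (pU σ) (![σ x1, σ x2], ![σ y1, σ y2]) q, momentMatrix_eq]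
  congr 1
  funext U
  unfold Fm
  simp [Fin.prod_univ_two, pU_ent, Equiv.Perm.inv_def, Equiv.symm_apply_apply]

lemma exists_perm {x1 x2 w0 w1 : Qub n} (h12 : x1 ≠ x2) (hw : w0 ≠ w1) :
    ∃ σ : Equiv.Perm (Qub n), σ x1 = w0 ∧ σ x2 = w1 := by
  refine ⟨(Equiv.swap x1 w0).trans (Equiv.swap ((Equiv.swap x1 w0) x2) w1), ?_, ?_⟩
  · have h1 : (Equiv.swap x1 w0) x1 = w0 := Equiv.swap_apply_left _ _
    have h2 : (Equiv.swap x1 w0) x2 ≠ w0 := by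
      intro h
      exact h12 (Equiv.injective _ (h.trans h1.symm)).symm
    simp only [Equiv.trans_apply, h1]
    exact Equiv.swap_apply_of_ne_of_ne (Ne.symm h2) hw
  · simp only [Equiv.trans_apply]
    exact Equiv.swap_apply_left _ _

end Inv

section Inv2
variable (μH : Measure (UGQ n)) [IsProbabilityMeasure μH]

-- rotation matrix
def rmat (e f : Qub n) : Matrix (Qub n) (Qub n) ℂ := fun a b =>
  if a = e then (if b = e then ((3/5:ℝ):ℂ) else if b = f then ((4/5:ℝ):ℂ) else 0)
  else if a = f then (if b = e then ((4/5:ℝ):ℂ) else if b = f then -((3/5:ℝ):ℂ) else 0)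
  else if a = b then 1 else 0

lemma sum_pair_support {e f : Qub n} (hef : e ≠ f) (F : Qub n → ℂ)
    (hF : ∀ x, x ≠ e → x ≠ f → F x = 0) : ∑ x, F x = F e + F f := by
  rw [← Finset.sum_erase_add _ _ (Finset.mem_univ f)]
  congr 1
  apply Finset.sum_eq_single_of_mem e (Finset.mem_erase.mpr ⟨hef, Finset.mem_univ e⟩)
  intro x hx hxe
  exact hF x hxe (Finset.mem_erase.mp hx).1

lemma rmat_mem {e f : Qub n} (hef : e ≠ f) : rmat e f ∈ Matrix.unitaryGroup (Qub n) ℂ := by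
  have hfe : f ≠ e := Ne.symm hef
  rw [Matrix.mem_unitaryGroup_iff]
  ext a b
  rw [Matrix.mul_apply, Matrix.one_apply]
  simp only [Matrix.star_apply]
  by_cases hae : a = e
  · rw [sum_pair_support hef _ (fun x hxe hxf => by
      simp [rmat, hae, if_neg hxe, if_neg hxf])]
    by_cases hbe : b = e
    · simp [rmat, hae, hbe, hef, hfe, Complex.star_def, ← Complex.ofReal_mul]
      norm_num
    · by_cases hbf : b = f
      · simp [rmat, hae, hbe, hbf, hef, hfe, Complex.star_def, ← Complex.ofReal_mul]
        norm_num
      · have heb : ¬ e = b := fun h => hbe h.symm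
        simp [rmat, hae, hbe, hbf, hef, hfe, heb, Complex.star_def]
  · by_cases haf : a = f
    · rw [sum_pair_support hef _ (fun x hxe hxf => by
        simp [rmat, hae, haf, if_neg hxe, if_neg hxf, hfe])]
      by_cases hbe : b = e
      · simp [rmat, hae, haf, hbe, hef, hfe, Complex.star_def, ← Complex.ofReal_mul]
        norm_num
      · by_cases hbf : b = f
        · simp [rmat, hae, haf, hbe, hbf, hef, hfe, Complex.star_def, ← Complex.ofReal_mul]
          norm_num
        · have hfb : ¬ f = b := fun h => hbf h.symm
          simp [rmat, hae, haf, hbe, hbf, hef, hfe, hfb, Complex.star_def]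
    · rw [Finset.sum_eq_single a]
      · simp only [rmat, if_neg hae, if_neg haf, if_pos rfl, one_mul]
        by_cases hbe : b = e
        · have hba : ¬ a = b := fun h => hae (h.trans hbe)
          simp [rmat, hae, haf, hbe, hba]
        · by_cases hbf : b = f
          · have hba : ¬ a = b := fun h => haf (h.trans hbf)
            simp [rmat, hae, haf, hbe, hbf, hba]
          · simp only [rmat, if_neg hbe, if_neg hbf]
            by_cases hab : a = b
            · simp [hab]
            · have hba : ¬ b = a := fun h => hab h.symm
              simp [hab, hba, Complex.star_def]
      · intro x _ hxa
        simp [rmat, hae, haf, Ne.symm hxa]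
      · simp

def rU {e f : Qub n} (hef : e ≠ f) : UGQ n := ⟨rmat e f, rmat_mem hef⟩

lemma rU_ent {e f : Qub n} (hef : e ≠ f) (U : UGQ n) (s : Qub n) :
    ((rU hef * U : UGQ n) : Matrix (Qub n) (Qub n) ℂ) e s
      = ((3/5:ℝ):ℂ) * (U : Matrix (Qub n) (Qub n) ℂ) e s
        + ((4/5:ℝ):ℂ) * (U : Matrix (Qub n) (Qub n) ℂ) f s := by
  show ∑ x, rmat e f e x * (U : Matrix (Qub n) (Qub n) ℂ) x s = _
  rw [sum_pair_support hef _ (fun x hxe hxf => by simp [rmat, if_neg hxe, if_neg hxf])]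
  simp [rmat, hef, Ne.symm hef]

def sel (e f : Qub n) : Fin 2 → Qub n := ![e, f]
def cc : Fin 2 → ℂ := ![((3/5:ℝ):ℂ), ((4/5:ℝ):ℂ)]

lemma Fm_rU {e f : Qub n} (hef : e ≠ f) (q) (U : UGQ n) :
    Fm (![e,e],![e,e]) q (rU hef * U) =
      ∑ v : Fin 2 × Fin 2 × Fin 2 × Fin 2,
        (cc v.1 * cc v.2.1 * cc v.2.2.1 * cc v.2.2.2)
          * Fm (![sel e f v.1, sel e f v.2.1], ![sel e f v.2.2.1, sel e f v.2.2.2]) q U := by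
  simp only [Fintype.sum_prod_type]
  simp only [Fin.sum_univ_two]
  unfold Fm sel cc
  simp only [Fin.prod_univ_two, Matrix.cons_val_zero, Matrix.cons_val_one, Matrix.head_cons,
    rU_ent hef, map_mul, map_add, Complex.conj_ofReal]
  ring

lemma X_eq_Y_add_Z (hinv : ∀ g : UGQ n, Measure.map (fun x => g * x) μH = μH)
    {e f : Qub n} (hef : e ≠ f) (q) :
    momentMatrix μH 2 (![e,e],![e,e]) q
      = momentMatrix μH 2 (![e,f],![e,f]) q + momentMatrix μH 2 (![e,f],![f,e]) q := by
  have h1 := M_inv μH hinv (rU hef) (![e,e],![e,e]) q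
  simp only [Fm_rU hef] at h1
  rw [integral_finset_sum _ (fun v _ => ((integrable_Fm μH _ _).const_mul _))] at h1
  simp only [integral_const_mul, ← momentMatrix_eq] at h1
  simp only [Fintype.sum_prod_type, Fin.sum_univ_two] at h1
  unfold sel cc at h1
  simp only [Matrix.cons_val_zero, Matrix.cons_val_one, Matrix.head_cons] at h1
  -- kill the 10 mismatched terms
  have hv : ∀ (x1 x2 y1 y2 : Qub n),
      ((if x1 = e then 1 else 0) + (if x2 = e then 1 else 0) : ℕ)
        ≠ (if y1 = e then 1 else 0) + (if y2 = e then 1 else 0) →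
      momentMatrix μH 2 (![x1,x2],![y1,y2]) q = 0 := fun x1 x2 y1 y2 h => vanish μH hinv e x1 x2 y1 y2 q h
  rw [hv e e e f (by simp [hef, Ne.symm hef]), hv e e f e (by simp [hef, Ne.symm hef]),
      hv e e f f (by simp [hef, Ne.symm hef]), hv e f e e (by simp [hef, Ne.symm hef]),
      hv e f f f (by simp [hef, Ne.symm hef]), hv f e e e (by simp [hef, Ne.symm hef]),
      hv f e f f (by simp [hef, Ne.symm hef]), hv f f e e (by simp [hef, Ne.symm hef]),
      hv f f e f (by simp [hef, Ne.symm hef]), hv f f f e (by simp [hef, Ne.symm hef])] at h1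
  -- symmetry
  have hswap := Equiv.swap_apply_left e f
  have hswap' := Equiv.swap_apply_right e f
  have hff : momentMatrix μH 2 (![f,f],![f,f]) q = momentMatrix μH 2 (![e,e],![e,e]) q := by
    have := M_perm μH hinv (Equiv.swap e f) e e e e q
    rwa [hswap] at this
  have hfe : momentMatrix μH 2 (![f,e],![f,e]) q = momentMatrix μH 2 (![e,f],![e,f]) q := by
    have := M_perm μH hinv (Equiv.swap e f) e f e f q
    rwa [hswap, hswap'] at this
  have hfe2 : momentMatrix μH 2 (![f,e],![e,f]) q = momentMatrix μH 2 (![e,f],![f,e]) q := by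
    have := M_perm μH hinv (Equiv.swap e f) e f f e q
    rwa [hswap, hswap'] at this
  rw [hff, hfe, hfe2] at h1
  have harith : ((288/625 : ℝ):ℂ) * momentMatrix μH 2 (![e,e],![e,e]) q
      = ((288/625 : ℝ):ℂ) * (momentMatrix μH 2 (![e,f],![e,f]) q
          + momentMatrix μH 2 (![e,f],![f,e]) q) := by
    push_cast at h1 ⊢
    linear_combination h1
  have hne : ((288/625 : ℝ):ℂ) ≠ 0 := by norm_num
  exact mul_left_cancel₀ hne harith

-- contractions
lemma contractA (q : (Fin 2 → Qub n) × (Fin 2 → Qub n)) :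
    ∑ x1 : Qub n, ∑ x2 : Qub n, momentMatrix μH 2 (![x1,x2],![x1,x2]) q
      = (if q.2 0 = q.1 0 then 1 else 0) * (if q.2 1 = q.1 1 then 1 else 0) := by
  have point : ∀ U : UGQ n,
      (∑ x1 : Qub n, ∑ x2 : Qub n, Fm (![x1,x2],![x1,x2]) q U)
        = (if q.2 0 = q.1 0 then (1:ℂ) else 0) * (if q.2 1 = q.1 1 then 1 else 0) := by
    intro U
    have hps : (∑ x1 : Qub n, (starRingEnd ℂ) ((U : Matrix (Qub n) (Qub n) ℂ) x1 (q.2 0))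
          * (U : Matrix (Qub n) (Qub n) ℂ) x1 (q.1 0))
        * (∑ x2 : Qub n, (starRingEnd ℂ) ((U : Matrix (Qub n) (Qub n) ℂ) x2 (q.2 1))
          * (U : Matrix (Qub n) (Qub n) ℂ) x2 (q.1 1))
        = ∑ x1 : Qub n, ∑ x2 : Qub n, Fm (![x1,x2],![x1,x2]) q U := by
      rw [Finset.sum_mul_sum]
      apply Finset.sum_congr rfl; intro x1 _
      apply Finset.sum_congr rfl; intro x2 _
      unfold Fm
      simp only [Fin.prod_univ_two, Matrix.cons_val_zero, Matrix.cons_val_one,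
        Matrix.head_cons, map_mul]
      ring
    rw [← hps, unitarity U (q.2 0) (q.1 0), unitarity U (q.2 1) (q.1 1)]
  calc ∑ x1 : Qub n, ∑ x2 : Qub n, momentMatrix μH 2 (![x1,x2],![x1,x2]) q
      = ∑ x1 : Qub n, ∫ U, ∑ x2 : Qub n, Fm (![x1,x2],![x1,x2]) q U ∂μH :=
        Finset.sum_congr rfl (fun x1 _ =>
          (integral_finset_sum _ (fun x2 _ => integrable_Fm μH _ _)).symm)
    _ = ∫ U, ∑ x1 : Qub n, ∑ x2 : Qub n, Fm (![x1,x2],![x1,x2]) q U ∂μH :=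
        (integral_finset_sum _ (fun x1 _ => integrable_finset_sum _
          (fun x2 _ => integrable_Fm μH _ _))).symm
    _ = ∫ _U : UGQ n, ((if q.2 0 = q.1 0 then (1:ℂ) else 0)
          * (if q.2 1 = q.1 1 then 1 else 0)) ∂μH := by simp only [point]
    _ = _ := by rw [integral_const]; simp

lemma contractB (q : (Fin 2 → Qub n) × (Fin 2 → Qub n)) :
    ∑ x1 : Qub n, ∑ x2 : Qub n, momentMatrix μH 2 (![x1,x2],![x2,x1]) q
      = (if q.2 1 = q.1 0 then 1 else 0) * (if q.2 0 = q.1 1 then 1 else 0) := by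
  have point : ∀ U : UGQ n,
      (∑ x1 : Qub n, ∑ x2 : Qub n, Fm (![x1,x2],![x2,x1]) q U)
        = (if q.2 1 = q.1 0 then (1:ℂ) else 0) * (if q.2 0 = q.1 1 then 1 else 0) := by
    intro U
    have hps : (∑ x1 : Qub n, (starRingEnd ℂ) ((U : Matrix (Qub n) (Qub n) ℂ) x1 (q.2 1))
          * (U : Matrix (Qub n) (Qub n) ℂ) x1 (q.1 0))
        * (∑ x2 : Qub n, (starRingEnd ℂ) ((U : Matrix (Qub n) (Qub n) ℂ) x2 (q.2 0))
          * (U : Matrix (Qub n) (Qub n) ℂ) x2 (q.1 1))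
        = ∑ x1 : Qub n, ∑ x2 : Qub n, Fm (![x1,x2],![x2,x1]) q U := by
      rw [Finset.sum_mul_sum]
      apply Finset.sum_congr rfl; intro x1 _
      apply Finset.sum_congr rfl; intro x2 _
      unfold Fm
      simp only [Fin.prod_univ_two, Matrix.cons_val_zero, Matrix.cons_val_one,
        Matrix.head_cons, map_mul]
      ring
    rw [← hps, unitarity U (q.2 1) (q.1 0), unitarity U (q.2 0) (q.1 1)]
  calc ∑ x1 : Qub n, ∑ x2 : Qub n, momentMatrix μH 2 (![x1,x2],![x2,x1]) q
      = ∑ x1 : Qub n, ∫ U, ∑ x2 : Qub n, Fm (![x1,x2],![x2,x1]) q U ∂μH :=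
        Finset.sum_congr rfl (fun x1 _ =>
          (integral_finset_sum _ (fun x2 _ => integrable_Fm μH _ _)).symm)
    _ = ∫ U, ∑ x1 : Qub n, ∑ x2 : Qub n, Fm (![x1,x2],![x2,x1]) q U ∂μH :=
        (integral_finset_sum _ (fun x1 _ => integrable_finset_sum _
          (fun x2 _ => integrable_Fm μH _ _))).symm
    _ = ∫ _U : UGQ n, ((if q.2 1 = q.1 0 then (1:ℂ) else 0)
          * (if q.2 0 = q.1 1 then 1 else 0)) ∂μH := by simp only [point]
    _ = _ := by rw [integral_const]; simp

end Inv2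

section Class
variable (μH : Measure (UGQ n)) [IsProbabilityMeasure μH]

lemma M_diag_single (hinv : ∀ g : UGQ n, Measure.map (fun x => g * x) μH = μH)
    (w0 x : Qub n) (q) :
    momentMatrix μH 2 (![x,x],![x,x]) q = momentMatrix μH 2 (![w0,w0],![w0,w0]) q := by
  have h := M_perm μH hinv (Equiv.swap x w0) w0 w0 w0 w0 q
  rwa [Equiv.swap_apply_right] at h

lemma M_diag_pair (hinv : ∀ g : UGQ n, Measure.map (fun x => g * x) μH = μH)
    {w0 w1 : Qub n} (hw : w0 ≠ w1) {x1 x2 : Qub n} (h12 : x1 ≠ x2) (q) :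
    momentMatrix μH 2 (![x1,x2],![x1,x2]) q = momentMatrix μH 2 (![w0,w1],![w0,w1]) q := by
  obtain ⟨σ, h1, h2⟩ := exists_perm h12 hw
  have h := M_perm μH hinv σ x1 x2 x1 x2 q
  rw [h1, h2] at h
  exact h.symm

lemma M_swap_pair (hinv : ∀ g : UGQ n, Measure.map (fun x => g * x) μH = μH)
    {w0 w1 : Qub n} (hw : w0 ≠ w1) {x1 x2 : Qub n} (h12 : x1 ≠ x2) (q) :
    momentMatrix μH 2 (![x1,x2],![x2,x1]) q = momentMatrix μH 2 (![w0,w1],![w1,w0]) q := by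
  obtain ⟨σ, h1, h2⟩ := exists_perm h12 hw
  have h := M_perm μH hinv σ x1 x2 x2 x1 q
  rw [h1, h2] at h
  exact h.symm

end Class

section Pat
variable {m : ℕ}
variable (μH : Measure (UGQ (m+1))) [IsProbabilityMeasure μH]

lemma up_eq_iff {a b : Fin 2} {g h : Qub (m+1)} (hg : g 0 = 0) (hh : h 0 = 0) :
    Function.update g 0 a = Function.update h 0 b ↔ (a = b ∧ g = h) := by
  constructor
  · intro hupd
    have hab : a = b := by
      have := congrFun hupd 0
      simpa using this
    refine ⟨hab, funext fun i => ?_⟩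
    by_cases hi : i = 0
    · subst hi; rw [hg, hh]
    · have := congrFun hupd i
      rwa [Function.update_of_ne hi, Function.update_of_ne hi] at this
  · rintro ⟨rfl, rfl⟩; rfl

lemma up_ne_of_ne_val {a b : Fin 2} {g h : Qub (m+1)} (hab : a ≠ b) :
    Function.update g 0 a ≠ Function.update h 0 b := by
  intro hupd
  have := congrFun hupd 0
  simp at this
  exact hab this

lemma M_pattern (hinv : ∀ g : UGQ (m+1), Measure.map (fun x => g * x) μH = μH)
    {w0 w1 : Qub (m+1)} (hw : w0 ≠ w1)
    (a b : Fin 2) (g h : Qub (m+1)) (hg : g 0 = 0) (hh : h 0 = 0) (q) :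
    momentMatrix μH 2
      (![Function.update g 0 a, Function.update h 0 b],
       ![Function.update g 0 b, Function.update h 0 a]) q
    = if a = b then
        (if g = h then momentMatrix μH 2 (![w0,w0],![w0,w0]) q
         else momentMatrix μH 2 (![w0,w1],![w0,w1]) q)
      else
        (if g = h then momentMatrix μH 2 (![w0,w1],![w1,w0]) q else 0) := by
  by_cases hab : a = b
  · subst hab
    rw [if_pos rfl]
    by_cases hgh : g = h
    · subst hgh
      rw [if_pos rfl]
      exact M_diag_single μH hinv _ _ q
    · rw [if_neg hgh]
      have hne : Function.update g 0 a ≠ Function.update h 0 a := by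
        intro hu
        exact hgh ((up_eq_iff hg hh).mp hu).2
      exact M_diag_pair μH hinv hw hne q
  · rw [if_neg hab]
    by_cases hgh : g = h
    · subst hgh
      rw [if_pos rfl]
      exact M_swap_pair μH hinv hw (up_ne_of_ne_val hab) q
    · rw [if_neg hgh]
      apply vanish μH hinv (Function.update g 0 a)
      have h1 : Function.update h 0 b ≠ Function.update g 0 a :=
        up_ne_of_ne_val (Ne.symm hab)
      have h2 : Function.update g 0 b ≠ Function.update g 0 a := up_ne_of_ne_val (Ne.symm hab)
      have h3 : Function.update h 0 a ≠ Function.update g 0 a := by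
        intro hu
        exact hgh (((up_eq_iff hh hg).mp hu).2).symm
      simp [h1, h2, h3]

end Pat

-- counting sums
section Count
variable {n : ℕ}

def e0 {m : ℕ} (g : Qub (m+1)) : ℂ := if g 0 = 0 then 1 else 0

lemma NC_eq {m : ℕ} : (∑ g : Qub (m+1), e0 g) = ((2^m : ℕ) : ℂ) := by
  unfold e0
  rw [Finset.sum_boole]
  norm_cast
  have : (Finset.univ.filter (fun g : Qub (m+1) => g 0 = 0)).card
      = Fintype.card {g : Qub (m+1) // g 0 = 0} := (Fintype.card_subtype _).symm
  rw [this]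
  have e : {g : Qub (m+1) // g 0 = 0} ≃ (Fin m → Fin 2) :=
    { toFun := fun g i => g.1 i.succ
      invFun := fun G => ⟨Fin.cons 0 G, by simp⟩
      left_inv := by
        rintro ⟨g, hg⟩
        apply Subtype.ext
        funext i
        refine Fin.cases ?_ (fun j => ?_) i
        · simp [hg.symm]
        · simp
      right_inv := by
        intro G
        funext i
        simp }
  rw [Fintype.card_congr e]
  simp [Fintype.card_fun]

lemma sum_gh {m : ℕ} (C1 C2 : ℂ) :
    ∑ g : Qub (m+1), ∑ h : Qub (m+1), e0 g * e0 h * (if g = h then C1 else C2)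
      = (∑ g : Qub (m+1), e0 g) * C1
        + ((∑ g : Qub (m+1), e0 g) * (∑ g : Qub (m+1), e0 g)
            - (∑ g : Qub (m+1), e0 g)) * C2 := by
  have point : ∀ g h : Qub (m+1), e0 g * e0 h * (if g = h then C1 else C2)
      = e0 g * e0 h * C2 + (if g = h then e0 g * (C1 - C2) else 0) := by
    intro g h
    by_cases hgh : g = h
    · subst hgh
      simp only [eq_self_iff_true, if_true]
      have he : e0 g * e0 g = e0 g := by unfold e0; split_ifs <;> ring
      linear_combination (C1 - C2) * he
    · simp only [if_neg hgh]; ring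
  simp_rw [point, Finset.sum_add_distrib]
  have h1 : ∀ g : Qub (m+1), (∑ h : Qub (m+1), if g = h then e0 g * (C1 - C2) else 0)
      = e0 g * (C1 - C2) := fun g => by simp
  have h2 : ∀ g : Qub (m+1), ∑ h : Qub (m+1), e0 g * e0 h * C2
      = e0 g * (∑ h : Qub (m+1), e0 h) * C2 := fun g => by
    rw [← Finset.sum_mul, ← Finset.mul_sum]
  simp_rw [h1, h2]
  rw [← Finset.sum_mul, ← Finset.sum_mul, ← Finset.sum_mul]
  ring
end Count

section Expand
variable {m : ℕ}

def patP (a b : Fin 2) (g h : Qub (m+1)) : (Fin 2 → Qub (m+1)) × (Fin 2 → Qub (m+1)) :=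
  (![Function.update g 0 a, Function.update h 0 b],
   ![Function.update g 0 b, Function.update h 0 a])

lemma A_ent (H : Matrix (Qub (m+1)) (Qub (m+1)) ℂ) (U : UGQ (m+1)) (x y : Qub (m+1)) :
    ((U : Matrix (Qub (m+1)) (Qub (m+1)) ℂ) * H * star (U : Matrix (Qub (m+1)) (Qub (m+1)) ℂ)) x y
      = ∑ s : Qub (m+1), ∑ t : Qub (m+1),
          (U : Matrix (Qub (m+1)) (Qub (m+1)) ℂ) x s * H s t
            * (starRingEnd ℂ) ((U : Matrix (Qub (m+1)) (Qub (m+1)) ℂ) y t) := by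
  rw [Matrix.mul_apply]
  have h1 : ∀ j, ((U : Matrix (Qub (m+1)) (Qub (m+1)) ℂ) * H) x j
      * (star (U : Matrix (Qub (m+1)) (Qub (m+1)) ℂ)) j y
      = ∑ s, (U : Matrix (Qub (m+1)) (Qub (m+1)) ℂ) x s * H s j
          * (starRingEnd ℂ) ((U : Matrix (Qub (m+1)) (Qub (m+1)) ℂ) y j) := by
    intro j
    rw [Matrix.mul_apply, Matrix.star_apply, Finset.sum_mul]
    rfl
  rw [Finset.sum_congr rfl (fun j _ => h1 j), Finset.sum_comm]

lemma ptr_ent (A : Matrix (Qub (m+1)) (Qub (m+1)) ℂ) (a b : Fin 2) :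
    ptr m A a b = ∑ g : Qub (m+1), e0 g * A (Function.update g 0 a) (Function.update g 0 b) := by
  unfold ptr e0
  apply Finset.sum_congr rfl
  intro g _
  split_ifs <;> simp

lemma trace_expand (H : Matrix (Qub (m+1)) (Qub (m+1)) ℂ) (U : UGQ (m+1)) :
    ((ptr m ((U : Matrix (Qub (m+1)) (Qub (m+1)) ℂ) * H * star (U : Matrix (Qub (m+1)) (Qub (m+1)) ℂ))
      * ptr m ((U : Matrix (Qub (m+1)) (Qub (m+1)) ℂ) * H * star (U : Matrix (Qub (m+1)) (Qub (m+1)) ℂ))).trace)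
    = ∑ a : Fin 2, ∑ b : Fin 2, ∑ g : Qub (m+1), ∑ h : Qub (m+1),
        ∑ s1 : Qub (m+1), ∑ s2 : Qub (m+1), ∑ t1 : Qub (m+1), ∑ t2 : Qub (m+1),
          (e0 g * e0 h * H s1 t1 * H s2 t2) * Fm (patP a b g h) (![s1,s2],![t1,t2]) U := by
  have step1 : ∀ B : Matrix (Fin 2) (Fin 2) ℂ,
      (B * B).trace = ∑ a : Fin 2, ∑ b : Fin 2, B a b * B b a := by
    intro B
    simp [Matrix.trace, Matrix.diag, Matrix.mul_apply]
  rw [step1]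
  apply Finset.sum_congr rfl; intro a _
  apply Finset.sum_congr rfl; intro b _
  rw [ptr_ent, ptr_ent, Finset.sum_mul_sum]
  apply Finset.sum_congr rfl; intro g _
  apply Finset.sum_congr rfl; intro h _
  -- goal: (e0 g * A x1 y1) * (e0 h * A x2 y2) = Σ_{s1 s2 t1 t2} ...
  rw [A_ent H U (Function.update g 0 a) (Function.update g 0 b),
      A_ent H U (Function.update h 0 b) (Function.update h 0 a)]
  rw [show (e0 g * ∑ s : Qub (m+1), ∑ t : Qub (m+1),
        (U : Matrix (Qub (m+1)) (Qub (m+1)) ℂ) (Function.update g 0 a) s * H s t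
          * (starRingEnd ℂ) ((U : Matrix (Qub (m+1)) (Qub (m+1)) ℂ) (Function.update g 0 b) t))
      * (e0 h * ∑ s : Qub (m+1), ∑ t : Qub (m+1),
        (U : Matrix (Qub (m+1)) (Qub (m+1)) ℂ) (Function.update h 0 b) s * H s t
          * (starRingEnd ℂ) ((U : Matrix (Qub (m+1)) (Qub (m+1)) ℂ) (Function.update h 0 a) t))
    = (∑ s : Qub (m+1), ∑ t : Qub (m+1),
        e0 g * ((U : Matrix (Qub (m+1)) (Qub (m+1)) ℂ) (Function.update g 0 a) s * H s t
          * (starRingEnd ℂ) ((U : Matrix (Qub (m+1)) (Qub (m+1)) ℂ) (Function.update g 0 b) t)))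
      * (∑ s : Qub (m+1), ∑ t : Qub (m+1),
        e0 h * ((U : Matrix (Qub (m+1)) (Qub (m+1)) ℂ) (Function.update h 0 b) s * H s t
          * (starRingEnd ℂ) ((U : Matrix (Qub (m+1)) (Qub (m+1)) ℂ) (Function.update h 0 a) t)))
    from by rw [Finset.mul_sum, Finset.mul_sum]; congr 1 <;>
      exact Finset.sum_congr rfl (fun s _ => Finset.mul_sum _ _ _)]
  rw [Finset.sum_mul_sum]
  apply Finset.sum_congr rfl; intro s1 _
  apply Finset.sum_congr rfl; intro s2 _
  rw [Finset.sum_mul_sum]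
  apply Finset.sum_congr rfl; intro t1 _
  apply Finset.sum_congr rfl; intro t2 _
  unfold Fm patP
  simp only [Fin.prod_univ_two, Matrix.cons_val_zero, Matrix.cons_val_one, Matrix.head_cons,
    map_mul]
  ring

lemma EC_eq_sum (H : Matrix (Qub (m+1)) (Qub (m+1)) ℂ) (μ : Measure (UGQ (m+1)))
    [IsProbabilityMeasure μ] :
    (∫ C : UGQ (m+1),
        ((ptr m ((C : Matrix (Qub (m+1)) (Qub (m+1)) ℂ) * H * star (C : Matrix (Qub (m+1)) (Qub (m+1)) ℂ))
          * ptr m ((C : Matrix (Qub (m+1)) (Qub (m+1)) ℂ) * H * star (C : Matrix (Qub (m+1)) (Qub (m+1)) ℂ))).trace) ∂μ)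
    = ∑ a : Fin 2, ∑ b : Fin 2, ∑ g : Qub (m+1), ∑ h : Qub (m+1),
        ∑ s1 : Qub (m+1), ∑ s2 : Qub (m+1), ∑ t1 : Qub (m+1), ∑ t2 : Qub (m+1),
          (e0 g * e0 h * H s1 t1 * H s2 t2)
            * momentMatrix μ 2 (patP a b g h) (![s1,s2],![t1,t2]) := by
  have pointV : ∀ U : UGQ (m+1),
      ((ptr m ((U : Matrix (Qub (m+1)) (Qub (m+1)) ℂ) * H * star (U : Matrix (Qub (m+1)) (Qub (m+1)) ℂ))
        * ptr m ((U : Matrix (Qub (m+1)) (Qub (m+1)) ℂ) * H * star (U : Matrix (Qub (m+1)) (Qub (m+1)) ℂ))).trace)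
      = ∑ v : (Fin 2 × Fin 2) × (Qub (m+1) × Qub (m+1)) × (Qub (m+1) × Qub (m+1)) × (Qub (m+1) × Qub (m+1)),
          (e0 v.2.1.1 * e0 v.2.1.2 * H v.2.2.1.1 v.2.2.2.1 * H v.2.2.1.2 v.2.2.2.2)
            * Fm (patP v.1.1 v.1.2 v.2.1.1 v.2.1.2) (![v.2.2.1.1, v.2.2.1.2],![v.2.2.2.1, v.2.2.2.2]) U := by
    intro U
    rw [trace_expand H U]
    simp only [Fintype.sum_prod_type]
  simp only [pointV]
  rw [integral_finset_sum _ (fun v _ => (integrable_Fm μ _ _).const_mul _)]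
  simp only [integral_const_mul, ← momentMatrix_eq]
  simp only [Fintype.sum_prod_type]

end Expand

-- new small helpers
lemma count_diag {α : Type*} [Fintype α] [DecidableEq α] (C1 C2 : ℂ) :
    ∑ x1 : α, ∑ x2 : α, (if x1 = x2 then C1 else C2)
      = (Fintype.card α : ℂ) * C1 + ((Fintype.card α : ℂ)^2 - (Fintype.card α : ℂ)) * C2 := by
  have point : ∀ x1 x2 : α, (if x1 = x2 then C1 else C2)
      = C2 + (if x1 = x2 then C1 - C2 else 0) := by
    intro x1 x2; split_ifs <;> ring
  simp_rw [point, Finset.sum_add_distrib, Finset.sum_ite_eq, Finset.mem_univ, if_true,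
    Finset.sum_const, Finset.card_univ, nsmul_eq_mul]
  push_cast
  ring

lemma swap_sum {m : ℕ} (f : Qub (m+1) → Qub (m+1) → Qub (m+1) → Qub (m+1) → Qub (m+1) → Qub (m+1) → ℂ) :
    ∑ x1 : Qub (m+1), ∑ x2 : Qub (m+1), ∑ s1 : Qub (m+1), ∑ s2 : Qub (m+1),
        ∑ t1 : Qub (m+1), ∑ t2 : Qub (m+1), f x1 x2 s1 s2 t1 t2
      = ∑ s1 : Qub (m+1), ∑ s2 : Qub (m+1), ∑ t1 : Qub (m+1), ∑ t2 : Qub (m+1),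
          ∑ x1 : Qub (m+1), ∑ x2 : Qub (m+1), f x1 x2 s1 s2 t1 t2 := by
  calc ∑ x1 : Qub (m+1), ∑ x2 : Qub (m+1), ∑ s1 : Qub (m+1), ∑ s2 : Qub (m+1),
        ∑ t1 : Qub (m+1), ∑ t2 : Qub (m+1), f x1 x2 s1 s2 t1 t2
      = ∑ p : Qub (m+1) × Qub (m+1), ∑ r : (Qub (m+1) × Qub (m+1)) × (Qub (m+1) × Qub (m+1)),
          f p.1 p.2 r.1.1 r.1.2 r.2.1 r.2.2 := by
        simp only [Fintype.sum_prod_type]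
    _ = ∑ r : (Qub (m+1) × Qub (m+1)) × (Qub (m+1) × Qub (m+1)), ∑ p : Qub (m+1) × Qub (m+1),
          f p.1 p.2 r.1.1 r.1.2 r.2.1 r.2.2 := Finset.sum_comm
    _ = _ := by simp only [Fintype.sum_prod_type]

lemma sum4_factor {m : ℕ} (c : ℂ) (H : Matrix (Qub (m+1)) (Qub (m+1)) ℂ)
    (G : ((Fin 2 → Qub (m+1)) × (Fin 2 → Qub (m+1))) → ℂ) :
    ∑ s1 : Qub (m+1), ∑ s2 : Qub (m+1), ∑ t1 : Qub (m+1), ∑ t2 : Qub (m+1),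
        (c * H s1 t1 * H s2 t2) * G (![s1,s2],![t1,t2])
      = c * ∑ s1 : Qub (m+1), ∑ s2 : Qub (m+1), ∑ t1 : Qub (m+1), ∑ t2 : Qub (m+1),
          H s1 t1 * H s2 t2 * G (![s1,s2],![t1,t2]) := by
  have point : ∀ s1 s2 t1 t2 : Qub (m+1),
      (c * H s1 t1 * H s2 t2) * G (![s1,s2],![t1,t2])
        = c * (H s1 t1 * H s2 t2 * G (![s1,s2],![t1,t2])) := by
    intro s1 s2 t1 t2; ring
  simp_rw [point, ← Finset.mul_sum]

end Helper

open Helper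

/-- If `μ` is an exact unitary 2-design on `n = m+1` qubits, then for every Hermitian `H`
with `Tr(H²) ≤ 1`,
`E_{C∼μ} Tr((Tr_{[2,n]}(C H C†))²) ≥ ((3/2)/(2^n − 2^{−n})) Tr(H²)`. -/
theorem stmt4 (m : ℕ) (H : Matrix (Qub (m + 1)) (Qub (m + 1)) ℂ) (hH : H.IsHermitian)
    (htr : ((H * H).trace).re ≤ 1)
    (μ μH : Measure (UGQ (m + 1))) [IsProbabilityMeasure μ] [IsProbabilityMeasure μH]
    (hinv : ∀ g : UGQ (m + 1), Measure.map (fun x => g * x) μH = μH)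
    (hdesign : momentMatrix μ 2 = momentMatrix μH 2) :
    ((3 / 2) / ((2 : ℝ) ^ (m + 1) - ((2 : ℝ) ^ (m + 1))⁻¹)) * ((H * H).trace).re ≤
      (∫ C : UGQ (m + 1),
        ((ptr m ((C : Matrix (Qub (m + 1)) (Qub (m + 1)) ℂ) * H *
            star (C : Matrix (Qub (m + 1)) (Qub (m + 1)) ℂ)) *
          ptr m ((C : Matrix (Qub (m + 1)) (Qub (m + 1)) ℂ) * H *
            star (C : Matrix (Qub (m + 1)) (Qub (m + 1)) ℂ))).trace) ∂μ).re := by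
  classical
  set w0 : Qub (m+1) := fun _ => 0 with hw0
  set w1 : Qub (m+1) := fun _ => 1 with hw1
  have hw : w0 ≠ w1 := by
    intro h
    have := congrFun h 0
    simp [hw0, hw1] at this
  -- weighted sums
  set SX : ℂ := ∑ s1 : Qub (m+1), ∑ s2 : Qub (m+1), ∑ t1 : Qub (m+1), ∑ t2 : Qub (m+1),
      H s1 t1 * H s2 t2 * momentMatrix μH 2 (![w0,w0],![w0,w0]) (![s1,s2],![t1,t2]) with hSX
  set SY : ℂ := ∑ s1 : Qub (m+1), ∑ s2 : Qub (m+1), ∑ t1 : Qub (m+1), ∑ t2 : Qub (m+1),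
      H s1 t1 * H s2 t2 * momentMatrix μH 2 (![w0,w1],![w0,w1]) (![s1,s2],![t1,t2]) with hSY
  set SZ : ℂ := ∑ s1 : Qub (m+1), ∑ s2 : Qub (m+1), ∑ t1 : Qub (m+1), ∑ t2 : Qub (m+1),
      H s1 t1 * H s2 t2 * momentMatrix μH 2 (![w0,w1],![w1,w0]) (![s1,s2],![t1,t2]) with hSZ
  set NC : ℂ := ((2^m : ℕ) : ℂ) with hNC
  set EC : ℂ := ∫ C : UGQ (m + 1),
        ((ptr m ((C : Matrix (Qub (m + 1)) (Qub (m + 1)) ℂ) * H *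
            star (C : Matrix (Qub (m + 1)) (Qub (m + 1)) ℂ)) *
          ptr m ((C : Matrix (Qub (m + 1)) (Qub (m + 1)) ℂ) * H *
            star (C : Matrix (Qub (m + 1)) (Qub (m + 1)) ℂ))).trace) ∂μ with hECdef
  -- Step A : EC in terms of SX SY SZ
  have hXYZ : SX = SY + SZ := by
    rw [hSX, hSY, hSZ]
    simp_rw [X_eq_Y_add_Z μH hinv hw, mul_add, Finset.sum_add_distrib]
  have hEC : EC = 2*NC*SX + 2*(NC*NC - NC)*SY + 2*NC*SZ := by
    rw [hECdef, EC_eq_sum H μ, hdesign]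
    have inner : ∀ (a b : Fin 2) (g h : Qub (m+1)),
        (∑ s1 : Qub (m+1), ∑ s2 : Qub (m+1), ∑ t1 : Qub (m+1), ∑ t2 : Qub (m+1),
          (e0 g * e0 h * H s1 t1 * H s2 t2)
            * momentMatrix μH 2 (patP a b g h) (![s1,s2],![t1,t2]))
        = e0 g * e0 h * (if a = b then (if g = h then SX else SY)
            else (if g = h then SZ else 0)) := by
      intro a b g h
      by_cases hg : g 0 = 0
      · by_cases hh : h 0 = 0
        · unfold patP
          simp_rw [M_pattern μH hinv hw a b g h hg hh]
          by_cases hab : a = b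
          · by_cases hgh : g = h
            · simp only [if_pos hab, if_pos hgh]
              rw [sum4_factor (e0 g * e0 h) H, ← hSX]
            · simp only [if_pos hab, if_neg hgh]
              rw [sum4_factor (e0 g * e0 h) H, ← hSY]
          · by_cases hgh : g = h
            · simp only [if_neg hab, if_pos hgh]
              rw [sum4_factor (e0 g * e0 h) H, ← hSZ]
            · simp only [if_neg hab, if_neg hgh]
              simp
        · have : e0 h = 0 := by simp [e0, hh]
          simp [this]
      · have : e0 g = 0 := by simp [e0, hg]
        simp [this]
    simp_rw [inner]
    rw [Fin.sum_univ_two]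
    simp_rw [Fin.sum_univ_two]
    simp only [show ((0:Fin 2) = 0) = True from by simp, show ((0:Fin 2) = 1) = False from by simp,
      show ((1:Fin 2) = 0) = False from by simp, show ((1:Fin 2) = 1) = True from by simp,
      if_true, if_false]
    rw [sum_gh SX SY, sum_gh SZ (0:ℂ), NC_eq, ← hNC]
    ring
  -- Step B : contraction identities
  have diagW : ∀ x1 x2 : Qub (m+1),
      (∑ s1 : Qub (m+1), ∑ s2 : Qub (m+1), ∑ t1 : Qub (m+1), ∑ t2 : Qub (m+1),
        H s1 t1 * H s2 t2 * momentMatrix μH 2 (![x1,x2],![x1,x2]) (![s1,s2],![t1,t2]))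
      = if x1 = x2 then SX else SY := by
    intro x1 x2
    by_cases h12 : x1 = x2
    · rw [if_pos h12]
      subst h12
      simp_rw [M_diag_single μH hinv w0 x1]
      rfl
    · rw [if_neg h12]
      simp_rw [M_diag_pair μH hinv hw h12]
      rfl
  have swapW : ∀ x1 x2 : Qub (m+1),
      (∑ s1 : Qub (m+1), ∑ s2 : Qub (m+1), ∑ t1 : Qub (m+1), ∑ t2 : Qub (m+1),
        H s1 t1 * H s2 t2 * momentMatrix μH 2 (![x1,x2],![x2,x1]) (![s1,s2],![t1,t2]))
      = if x1 = x2 then SX else SZ := by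
    intro x1 x2
    by_cases h12 : x1 = x2
    · rw [if_pos h12]
      subst h12
      simp_rw [M_diag_single μH hinv w0 x1]
      rfl
    · rw [if_neg h12]
      simp_rw [M_swap_pair μH hinv hw h12]
      rfl
  set dC : ℂ := (Fintype.card (Qub (m+1)) : ℂ) with hdC
  have hdC2 : dC = 2 * NC := by
    rw [hdC, hNC]
    have : Fintype.card (Qub (m+1)) = 2^(m+1) := by
      simp [Fintype.card_fun]
    rw [this]
    push_cast
    ring
  have heq1 : dC * SX + (dC^2 - dC) * SY = H.trace ^ 2 := by
    rw [hdC, ← count_diag SX SY]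
    simp_rw [← diagW]
    rw [swap_sum]
    have pull : ∀ s1 s2 t1 t2 : Qub (m+1),
        (∑ x1 : Qub (m+1), ∑ x2 : Qub (m+1),
          H s1 t1 * H s2 t2 * momentMatrix μH 2 (![x1,x2],![x1,x2]) (![s1,s2],![t1,t2]))
        = H s1 t1 * H s2 t2 * ((if t1 = s1 then 1 else 0) * (if t2 = s2 then 1 else 0)) := by
      intro s1 s2 t1 t2
      simp_rw [← Finset.mul_sum]
      rw [contractA μH (![s1,s2],![t1,t2])]
      simp
      by_cases h1 : t1 = s1 <;> by_cases h2 : t2 = s2 <;> simp [h1, h2]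
    simp_rw [pull]
    have collapse : ∀ s1 s2 : Qub (m+1),
        (∑ t1 : Qub (m+1), ∑ t2 : Qub (m+1),
          H s1 t1 * H s2 t2 * ((if t1 = s1 then 1 else 0) * (if t2 = s2 then 1 else 0)))
        = H s1 s1 * H s2 s2 := by
      intro s1 s2
      rw [Finset.sum_eq_single s1]
      · rw [Finset.sum_eq_single s2] <;> simp +contextual
      · intro t1 _ ht1; simp [ht1]
      · simp
    simp_rw [collapse]
    rw [show H.trace ^2 = H.trace * H.trace from sq H.trace, Matrix.trace, Finset.sum_mul_sum]
    rfl
  have heq2 : dC * SX + (dC^2 - dC) * SZ = (H * H).trace := by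
    rw [hdC, ← count_diag SX SZ]
    simp_rw [← swapW]
    rw [swap_sum]
    have pull : ∀ s1 s2 t1 t2 : Qub (m+1),
        (∑ x1 : Qub (m+1), ∑ x2 : Qub (m+1),
          H s1 t1 * H s2 t2 * momentMatrix μH 2 (![x1,x2],![x2,x1]) (![s1,s2],![t1,t2]))
        = H s1 t1 * H s2 t2 * ((if t2 = s1 then 1 else 0) * (if t1 = s2 then 1 else 0)) := by
      intro s1 s2 t1 t2
      simp_rw [← Finset.mul_sum]
      rw [contractB μH (![s1,s2],![t1,t2])]
      simp
    simp_rw [pull]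
    have collapse : ∀ s1 s2 : Qub (m+1),
        (∑ t1 : Qub (m+1), ∑ t2 : Qub (m+1),
          H s1 t1 * H s2 t2 * ((if t2 = s1 then 1 else 0) * (if t1 = s2 then 1 else 0)))
        = H s1 s2 * H s2 s1 := by
      intro s1 s2
      rw [Finset.sum_eq_single s2]
      · rw [Finset.sum_eq_single s1] <;> simp +contextual
      · intro t1 _ ht1; simp [ht1]
      · simp
    simp_rw [collapse]
    rw [Matrix.trace]
    simp [Matrix.mul_apply, Matrix.diag]
  -- Step C : combine into the main complex identity
  have main : (2*(4*NC^2 - 1)) * EC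
      = (4*NC^2 - 4) * (H.trace)^2 + (6*NC) * (H * H).trace := by
    rw [hdC2] at heq1 heq2
    linear_combination (2*(4*NC^2-1)) * hEC + (4*NC^2-4) * heq1 + 6*NC * heq2
      + (8*NC^3 - 12*NC^2 + 4*NC) * hXYZ
  -- Step D : real parts and the final inequality
  have htraceim : H.trace.im = 0 := by
    have h1 : H.conjTranspose.trace = star H.trace := Matrix.trace_conjTranspose H
    rw [Matrix.IsHermitian.eq hH] at h1
    exact Complex.conj_eq_iff_im.mp h1.symm
  set NR : ℝ := (2:ℝ)^m with hNR
  have hNCR : NC = ((NR : ℝ) : ℂ) := by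
    rw [hNC, hNR]; push_cast; ring
  have mainC : ((2*(4*NR^2-1) : ℝ) : ℂ) * EC
      = ((4*NR^2-4 : ℝ) : ℂ) * (H.trace)^2 + ((6*NR : ℝ) : ℂ) * (H*H).trace := by
    rw [hNCR] at main
    push_cast
    linear_combination main
  have mainRe : (2*(4*NR^2-1)) * EC.re
      = (4*NR^2-4) * ((H.trace)^2).re + (6*NR) * ((H*H).trace).re := by
    have h := congrArg Complex.re mainC
    rw [Complex.add_re, Complex.re_ofReal_mul, Complex.re_ofReal_mul,
      Complex.re_ofReal_mul] at h
    exact h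
  have hPnn : 0 ≤ ((H.trace)^2).re := by
    rw [sq, Complex.mul_re, htraceim]
    simpa using mul_self_nonneg H.trace.re
  have hNR1 : (1:ℝ) ≤ NR := by
    rw [hNR]
    exact one_le_pow₀ (by norm_num)
  have hpow : (2:ℝ)^(m+1) = 2*NR := by rw [hNR, pow_succ]; ring
  rw [hpow]
  have hNR0 : NR ≠ 0 := by positivity
  have hden : (0:ℝ) < 4*NR^2 - 1 := by nlinarith
  have hcoef : (3/2 : ℝ) / (2*NR - (2*NR)⁻¹) = 6*NR / (2*(4*NR^2-1)) := by
    rw [show 2*NR - (2*NR)⁻¹ = (4*NR^2-1)/(2*NR) from by field_simp; ring]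
    rw [div_div_eq_mul_div]
    field_simp
    ring
  rw [hcoef, div_mul_eq_mul_div, div_le_iff₀ (by positivity)]
  nlinarith [mainRe, hPnn, hNR1, mul_nonneg (by nlinarith : (0:ℝ) ≤ 4*NR^2-4) hPnn]
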